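/- Let X be a metric space, A ⊂ X compact, g₀ : X → ℝ^m continuous, ε > 0, and suppose that for every d-dimensional affine subspace Π of ℝ^m the set g₀(A) ∩ Π can be covered by a finite disjoint family of open subsets of ℝ^m each of diameter less than ε. Then there exist an open neighborhood U of A in X and δ > 0 such that for every continuous bounded g : X → ℝ^m with sup_{x∈U} ‖g(x) − g₀(x)‖ ≤ δ, the closure of g(U) has the same property: for every d-plane Π, the set cl(g(U)) ∩ Π is coverable by a finite disjoint family of open subsets of ℝ^m each of diameter less than ε. -/

import Mathlib

open Metric Set Filter
open scoped RealInnerProductSpace Topology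

/-- `S` can be covered by a finite pairwise disjoint family of open subsets of `ℝ^m`,
each of diameter less than `ε`. -/
def epsDisjointCover (m : ℕ) (ε : ℝ) (S : Set (EuclideanSpace ℝ (Fin m))) : Prop :=
  ∃ 𝒰 : Set (Set (EuclideanSpace ℝ (Fin m))), 𝒰.Finite ∧ (∀ U ∈ 𝒰, IsOpen U) ∧
    𝒰.PairwiseDisjoint id ∧ (∀ U ∈ 𝒰, Metric.diam U < ε) ∧ S ⊆ ⋃₀ 𝒰

/-- `S` is of type `(d, ε)`: for every `d`-dimensional affine subspace `P` of `ℝ^m`,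
the set `S ∩ P` can be covered by a finite pairwise disjoint family of open subsets
of `ℝ^m` each of diameter less than `ε`. -/
def typeDEps (m d : ℕ) (ε : ℝ) (S : Set (EuclideanSpace ℝ (Fin m))) : Prop :=
  ∀ P : AffineSubspace ℝ (EuclideanSpace ℝ (Fin m)),
    (P : Set (EuclideanSpace ℝ (Fin m))).Nonempty →
    Module.finrank ℝ P.direction = d →
    epsDisjointCover m ε (S ∩ (P : Set (EuclideanSpace ℝ (Fin m))))

lemma epsDisjointCover_mono {m : ℕ} {ε : ℝ} {S T : Set (EuclideanSpace ℝ (Fin m))}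
    (hST : S ⊆ T) (h : epsDisjointCover m ε T) : epsDisjointCover m ε S := by
  obtain ⟨𝒰, h1, h2, h3, h4, h5⟩ := h
  exact ⟨𝒰, h1, h2, h3, h4, hST.trans h5⟩

lemma epsDisjointCover_empty {m : ℕ} {ε : ℝ} : epsDisjointCover m ε (∅ : Set _) :=
  ⟨∅, finite_empty, by simp, by simp [Set.PairwiseDisjoint], by simp, by simp⟩

lemma typeDEps_mono {m d : ℕ} {ε : ℝ} {S T : Set (EuclideanSpace ℝ (Fin m))}
    (hST : S ⊆ T) (h : typeDEps m d ε T) : typeDEps m d ε S := fun P h1 h2 =>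
  epsDisjointCover_mono (Set.inter_subset_inter_left _ hST) (h P h1 h2)

lemma infDist_le_of_mem_cthickening {E : Type*} [PseudoMetricSpace E] {δ : ℝ} (hδ : 0 ≤ δ)
    {s : Set E} {x : E} (hx : x ∈ Metric.cthickening δ s) : Metric.infDist x s ≤ δ := by
  rw [Metric.mem_cthickening_iff] at hx
  have h := ENNReal.toReal_mono (by simp) hx
  rwa [ENNReal.toReal_ofReal hδ] at h

lemma key_thickening {m d : ℕ} {ε : ℝ} {K : Set (EuclideanSpace ℝ (Fin m))}
    (hK : IsCompact K) (h : typeDEps m d ε K) :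
    ∃ η : ℝ, 0 < η ∧ typeDEps m d ε (Metric.cthickening η K) := by
  by_contra hcon
  push_neg at hcon
  set η : ℕ → ℝ := fun n => 1 / (n + 1) with hηdef
  have hη0 : ∀ n, 0 < η n := fun n => by positivity
  have hη1 : ∀ n : ℕ, η n ≤ 1 := fun n => by
    rw [hηdef]
    rw [div_le_one (by positivity)]
    simp
  have hstep : ∀ n : ℕ, ∃ P : AffineSubspace ℝ (EuclideanSpace ℝ (Fin m)),
      (P : Set (EuclideanSpace ℝ (Fin m))).Nonempty ∧ Module.finrank ℝ P.direction = d ∧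
      (∃ x, x ∈ Metric.cthickening (η n) K ∩ (P : Set (EuclideanSpace ℝ (Fin m)))) ∧
      ¬ epsDisjointCover m ε (Metric.cthickening (η n) K ∩ (P : Set (EuclideanSpace ℝ (Fin m)))) := by
    intro n
    have h1 : ¬ typeDEps m d ε (Metric.cthickening (η n) K) := hcon _ (hη0 n)
    unfold typeDEps at h1
    push_neg at h1
    obtain ⟨P, hPne, hPd, hPcov⟩ := h1
    refine ⟨P, hPne, hPd, ?_, hPcov⟩
    by_contra hx
    push_neg at hx
    have hemp : Metric.cthickening (η n) K ∩ (P : Set (EuclideanSpace ℝ (Fin m))) = ∅ :=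
      Set.eq_empty_iff_forall_notMem.2 hx
    exact hPcov (hemp ▸ epsDisjointCover_empty)
  choose P hPne hPdim hptex hPncov using hstep
  choose pt hpt using hptex
  have hKne : K.Nonempty := by
    by_contra h'
    rw [Set.not_nonempty_iff_eq_empty] at h'
    have := (hpt 0).1
    rw [h', Metric.cthickening_empty] at this
    exact this
  -- orthonormal bases of the directions
  have hfd : ∀ n, FiniteDimensional ℝ (P n).direction := fun n => inferInstance
  let b : ∀ n, OrthonormalBasis (Fin d) ℝ (P n).direction := fun n =>
    (stdOrthonormalBasis ℝ (P n).direction).reindex (finCongr (hPdim n))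
  let v : ℕ → Fin d → EuclideanSpace ℝ (Fin m) := fun n i => ((b n i : (P n).direction) : EuclideanSpace ℝ (Fin m))
  have hv_on : ∀ n, Orthonormal ℝ (v n) := by
    intro n
    rw [orthonormal_iff_ite]
    intro i j
    have := (b n).orthonormal
    rw [orthonormal_iff_ite] at this
    have h2 := this i j
    rwa [Submodule.coe_inner] at h2
  -- compact parameter space
  set R : Set (EuclideanSpace ℝ (Fin m)) := Metric.cthickening 1 K with hRdef
  have hRcomp : IsCompact R := hK.cthickening
  have hRbdd : Bornology.IsBounded R := hRcomp.isBounded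
  set Fr : Set (Fin d → EuclideanSpace ℝ (Fin m)) := {w | Orthonormal ℝ w} with hFrdef
  have hFrclosed : IsClosed Fr := by
    have : Fr = ⋂ (i : Fin d), ⋂ (j : Fin d),
        {w : Fin d → EuclideanSpace ℝ (Fin m) | ⟪w i, w j⟫ = if i = j then (1:ℝ) else 0} := by
      ext w
      simp [hFrdef, orthonormal_iff_ite, Set.mem_iInter]
    rw [this]
    refine isClosed_iInter fun i => isClosed_iInter fun j => isClosed_eq ?_ continuous_const
    exact Continuous.inner (continuous_apply i) (continuous_apply j)
  have hFrsub : Fr ⊆ Metric.closedBall 0 1 := by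
    intro w hw
    rw [Metric.mem_closedBall, dist_zero_right]
    rw [pi_norm_le_iff_of_nonneg zero_le_one]
    intro i
    rw [hw.1 i]
  have hFrcomp : IsCompact Fr :=
    (isCompact_closedBall (0 : Fin d → EuclideanSpace ℝ (Fin m)) 1).of_isClosed_subset
      hFrclosed hFrsub
  have hS : IsCompact (R ×ˢ Fr) := hRcomp.prod hFrcomp
  have hptR : ∀ n, pt n ∈ R := fun n =>
    Metric.cthickening_mono (hη1 n) K (hpt n).1
  have hu : ∀ n, ((pt n, v n) : EuclideanSpace ℝ (Fin m) × (Fin d → EuclideanSpace ℝ (Fin m))) ∈ R ×ˢ Fr :=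
    fun n => ⟨hptR n, hv_on n⟩
  obtain ⟨⟨p, vlim⟩, hmemS, φ, hφmono, hφlim⟩ := hS.tendsto_subseq hu
  have hlimp : Tendsto (fun n => pt (φ n)) atTop (𝓝 p) :=
    (continuous_fst.tendsto _).comp hφlim
  have hlimv : ∀ i, Tendsto (fun n => v (φ n) i) atTop (𝓝 (vlim i)) := by
    intro i
    have h2 : Tendsto (fun n => v (φ n)) atTop (𝓝 vlim) := (continuous_snd.tendsto _).comp hφlim
    exact (continuous_apply i).tendsto vlim |>.comp h2
  have hηlim : Tendsto (fun n => η (φ n)) atTop (𝓝 0) :=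
    tendsto_one_div_add_atTop_nhds_zero_nat.comp hφmono.tendsto_atTop
  have hpK : p ∈ K := by
    have h1 : Tendsto (fun n => Metric.infDist (pt (φ n)) K) atTop (𝓝 (Metric.infDist p K)) :=
      ((Metric.continuous_infDist_pt K).tendsto p).comp hlimp
    have h0 : Metric.infDist p K ≤ 0 :=
      le_of_tendsto_of_tendsto' h1 hηlim fun n =>
        infDist_le_of_mem_cthickening (hη0 (φ n)).le (hpt (φ n)).1
    rw [hK.isClosed.mem_iff_infDist_zero hKne]
    exact le_antisymm h0 Metric.infDist_nonneg
  have hvlim : Orthonormal ℝ vlim := hmemS.2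
  set Plim : AffineSubspace ℝ (EuclideanSpace ℝ (Fin m)) :=
    AffineSubspace.mk' p (Submodule.span ℝ (Set.range vlim)) with hPlimdef
  have hPlimne : (Plim : Set (EuclideanSpace ℝ (Fin m))).Nonempty :=
    ⟨p, AffineSubspace.self_mem_mk' _ _⟩
  have hPlimdim : Module.finrank ℝ Plim.direction = d := by
    rw [hPlimdef, AffineSubspace.direction_mk', finrank_span_eq_card hvlim.linearIndependent,
      Fintype.card_fin]
  obtain ⟨𝒰, hUfin, hUopen, hUdisj, hUdiam, hUcov⟩ := h Plim hPlimne hPlimdim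
  have hPlimclosed : IsClosed (Plim : Set (EuclideanSpace ℝ (Fin m))) :=
    Plim.closed_of_finiteDimensional
  have hKPcomp : IsCompact (K ∩ (Plim : Set (EuclideanSpace ℝ (Fin m)))) :=
    hK.inter_right hPlimclosed
  obtain ⟨c, hc0, hcsub⟩ :=
    hKPcomp.exists_thickening_subset_open (isOpen_sUnion hUopen) hUcov
  -- the key uniform claim
  have claim : ∃ δ : ℝ, 0 < δ ∧ ∀ x ∈ R, Metric.infDist x K ≤ δ →
      Metric.infDist x (Plim : Set (EuclideanSpace ℝ (Fin m))) ≤ δ →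
      x ∈ Metric.thickening c (K ∩ (Plim : Set (EuclideanSpace ℝ (Fin m)))) := by
    set F' : Set (EuclideanSpace ℝ (Fin m)) :=
      R \ Metric.thickening c (K ∩ (Plim : Set (EuclideanSpace ℝ (Fin m)))) with hF'def
    have hF'comp : IsCompact F' := hRcomp.diff Metric.isOpen_thickening
    rcases F'.eq_empty_or_nonempty with hF' | hF'
    · refine ⟨1, one_pos, fun x hx _ _ => ?_⟩
      by_contra hxt
      have : x ∈ F' := ⟨hx, hxt⟩
      rw [hF'] at this
      exact this.elim
    · obtain ⟨x₀, hx₀F, hmin⟩ := hF'comp.exists_isMinOn hF'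
        ((Metric.continuous_infDist_pt K).add
          (Metric.continuous_infDist_pt
            (Plim : Set (EuclideanSpace ℝ (Fin m))))).continuousOn
      have h01 : (0:ℝ) ≤ Metric.infDist x₀ K := Metric.infDist_nonneg
      have h02 : (0:ℝ) ≤ Metric.infDist x₀ (Plim : Set (EuclideanSpace ℝ (Fin m))) :=
        Metric.infDist_nonneg
      have hf0 : 0 < Metric.infDist x₀ K +
          Metric.infDist x₀ (Plim : Set (EuclideanSpace ℝ (Fin m))) := by
        rcases (add_nonneg h01 h02).lt_or_eq with h' | h'
        · exact h'
        · exfalso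
          have h1a : Metric.infDist x₀ K = 0 := by linarith
          have h1b : Metric.infDist x₀ (Plim : Set (EuclideanSpace ℝ (Fin m))) = 0 := by
            linarith
          have hx₀K : x₀ ∈ K := (hK.isClosed.mem_iff_infDist_zero hKne).2 h1a
          have hx₀P : x₀ ∈ (Plim : Set (EuclideanSpace ℝ (Fin m))) :=
            (hPlimclosed.mem_iff_infDist_zero hPlimne).2 h1b
          exact hx₀F.2 (Metric.self_subset_thickening hc0 _ ⟨hx₀K, hx₀P⟩)
      refine ⟨(Metric.infDist x₀ K +
          Metric.infDist x₀ (Plim : Set (EuclideanSpace ℝ (Fin m)))) / 3,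
          by positivity, fun x hxR hd1 hd2 => ?_⟩
      by_contra hxt
      have hxF : x ∈ F' := ⟨hxR, hxt⟩
      have hle := hmin hxF
      simp only [Set.mem_setOf_eq, Pi.add_apply] at hle
      linarith
  obtain ⟨δ, hδ0, hclaim⟩ := claim
  set M : ℝ := Metric.diam R with hMdef
  have hM0 : 0 ≤ M := Metric.diam_nonneg
  set err : ℕ → ℝ := fun n => dist (pt (φ n)) p + M * ∑ i, dist (v (φ n) i) (vlim i) with herrdef
  have herrlim : Tendsto err atTop (𝓝 0) := by
    have h1 : Tendsto (fun n => dist (pt (φ n)) p) atTop (𝓝 0) :=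
      tendsto_iff_dist_tendsto_zero.mp hlimp
    have h2 : Tendsto (fun n => ∑ i, dist (v (φ n) i) (vlim i)) atTop (𝓝 0) := by
      have := tendsto_finset_sum (Finset.univ : Finset (Fin d))
        (fun i _ => tendsto_iff_dist_tendsto_zero.mp (hlimv i))
      simpa using this
    have := h1.add ((tendsto_const_nhds (x := M)).mul h2)
    simpa using this
  have hev : ∀ᶠ n in atTop, err n < δ ∧ η (φ n) < δ :=
    (herrlim.eventually_lt_const hδ0).and (hηlim.eventually_lt_const hδ0)
  obtain ⟨n, hn⟩ := hev.exists
  obtain ⟨hnerr, hnη⟩ := hn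
  -- derive the contradiction: 𝒰 covers cthickening (η (φ n)) K ∩ P (φ n)
  refine hPncov (φ n) ⟨𝒰, hUfin, hUopen, hUdisj, hUdiam, ?_⟩
  rintro x ⟨hxK, hxP⟩
  have hxR : x ∈ R := Metric.cthickening_mono (hη1 (φ n)) K hxK
  have hxdK : Metric.infDist x K ≤ δ :=
    (infDist_le_of_mem_cthickening (hη0 (φ n)).le hxK).trans hnη.le
  -- express x in the frame of P (φ n)
  set n' := φ n with hn'def
  have hwmem : x - pt n' ∈ (P n').direction := by
    have := AffineSubspace.vsub_mem_direction hxP (hpt n').2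
    rwa [vsub_eq_sub] at this
  set t : Fin d → ℝ := fun i => ⟪v n' i, x - pt n'⟫ with htdef
  have hxeq : x - pt n' = ∑ i, t i • v n' i := by
    have hw := (b n').sum_repr' (⟨x - pt n', hwmem⟩ : (P n').direction)
    have h2 := congrArg (Subtype.val) hw
    simp only [Submodule.coe_sum, Submodule.coe_smul] at h2
    rw [← h2]
    refine Finset.sum_congr rfl fun i _ => ?_
    simp [htdef, Submodule.coe_inner, v]
  have ht : ∀ i, |t i| ≤ M := by
    intro i
    calc |t i| ≤ ‖v n' i‖ * ‖x - pt n'‖ := abs_real_inner_le_norm _ _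
    _ = ‖x - pt n'‖ := by rw [(hv_on n').1 i, one_mul]
    _ = dist x (pt n') := (dist_eq_norm _ _).symm
    _ ≤ M := Metric.dist_le_diam_of_mem hRbdd hxR (hptR n')
  set y : EuclideanSpace ℝ (Fin m) := p + ∑ i, t i • vlim i with hydef
  have hy : y ∈ (Plim : Set (EuclideanSpace ℝ (Fin m))) := by
    rw [hPlimdef]
    rw [SetLike.mem_coe, AffineSubspace.mem_mk', vsub_eq_sub, hydef,
      add_sub_cancel_left]
    exact Submodule.sum_mem _ fun i _ =>
      Submodule.smul_mem _ _ (Submodule.subset_span ⟨i, rfl⟩)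
  have hdxy : dist x y ≤ err n := by
    have hxy : x - y = (pt n' - p) + ∑ i, t i • (v n' i - vlim i) := by
      have : x = pt n' + ∑ i, t i • v n' i := by
        rw [← hxeq]; abel
      rw [this, hydef]
      simp only [smul_sub, Finset.sum_sub_distrib]
      abel
    rw [dist_eq_norm, hxy]
    calc ‖(pt n' - p) + ∑ i, t i • (v n' i - vlim i)‖
        ≤ ‖pt n' - p‖ + ‖∑ i, t i • (v n' i - vlim i)‖ := norm_add_le _ _
      _ ≤ ‖pt n' - p‖ + ∑ i, ‖t i • (v n' i - vlim i)‖ :=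
          add_le_add_right (norm_sum_le _ _) _
      _ ≤ dist (pt n') p + ∑ i, M * dist (v n' i) (vlim i) := by
          refine add_le_add (le_of_eq (dist_eq_norm _ _).symm) (Finset.sum_le_sum fun i _ => ?_)
          rw [norm_smul, Real.norm_eq_abs, dist_eq_norm]
          exact mul_le_mul_of_nonneg_right (ht i) (norm_nonneg _)
      _ = err n := by simp only [herrdef, ← hn'def]; rw [Finset.mul_sum]
  have hxdP : Metric.infDist x (Plim : Set (EuclideanSpace ℝ (Fin m))) ≤ δ :=
    (Metric.infDist_le_dist_of_mem hy).trans (hdxy.trans hnerr.le)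
  exact hcsub (hclaim x hxR hxdK hxdP)

/-- Lemma 3.1: if `A ⊆ X` is compact and `g₀(A)` is of type `(d, ε)`, then there exist
an open neighborhood `U` of `A` and `δ > 0` such that `cl(g(U))` is of type `(d, ε)` for
every bounded continuous `g` with `g|U` `δ`-close to `g₀|U`. -/
theorem stmt11 {X : Type*} [MetricSpace X] (m d : ℕ) (A : Set X) (hA : IsCompact A)
    (g₀ : X → EuclideanSpace ℝ (Fin m)) (hg₀ : Continuous g₀) (ε : ℝ) (hε : 0 < ε)
    (h : typeDEps m d ε (g₀ '' A)) :
    ∃ U : Set X, IsOpen U ∧ A ⊆ U ∧ ∃ δ : ℝ, 0 < δ ∧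
      ∀ g : X → EuclideanSpace ℝ (Fin m), Continuous g →
        Bornology.IsBounded (Set.range g) →
        (∀ x ∈ U, dist (g x) (g₀ x) ≤ δ) →
        typeDEps m d ε (closure (g '' U)) := by
  obtain ⟨η, hη, htype⟩ := key_thickening (hA.image hg₀) h
  set K := g₀ '' A with hKdef
  refine ⟨g₀ ⁻¹' (Metric.thickening (η/2) K), Metric.isOpen_thickening.preimage hg₀,
    fun x hx => Metric.self_subset_thickening (by positivity) _ (Set.mem_image_of_mem _ hx),
    η/2, by positivity, ?_⟩
  intro g hg hgb hclose
  refine typeDEps_mono ?_ htype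
  have hsub : g '' (g₀ ⁻¹' (Metric.thickening (η/2) K)) ⊆ Metric.thickening η K := by
    rintro _ ⟨x, hxU, rfl⟩
    rw [Set.mem_preimage, Metric.mem_thickening_iff] at hxU
    obtain ⟨z, hzK, hz⟩ := hxU
    rw [Metric.mem_thickening_iff]
    refine ⟨z, hzK, ?_⟩
    calc dist (g x) z ≤ dist (g x) (g₀ x) + dist (g₀ x) z := dist_triangle _ _ _
      _ < η/2 + η/2 := by
          have := hclose x (by rw [Set.mem_preimage, Metric.mem_thickening_iff]; exact ⟨z, hzK, hz⟩)
          exact add_lt_add_of_le_of_lt this hz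
      _ = η := by ring
  exact closure_minimal (hsub.trans (Metric.thickening_subset_cthickening _ _))
    Metric.isClosed_cthickening
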